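/- Every minimal k-polar obstruction has at most k+1 trivial connected components, i.e., at most k+1 isolated vertices. -/

import Mathlib

/-- A graph is `(s,k)`-polar if its vertices can be partitioned into `A` (fibers of `f` below `s`)
inducing a complete multipartite graph with at most `s` parts, and `B` (fibers in `[s, s+k)`)
inducing a disjoint union of at most `k` cliques, with no edges between distinct parts of `B`
and all edges between distinct parts of `A`. -/
def IsSKPolar {V : Type*} (G : SimpleGraph V) (s k : ℕ) : Prop :=
  ∃ f : V → ℕ, (∀ v, f v < s + k) ∧
    (∀ u v, u ≠ v → f u < s → f v < s → (G.Adj u v ↔ f u ≠ f v)) ∧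
    (∀ u v, u ≠ v → s ≤ f u → s ≤ f v → (G.Adj u v ↔ f u = f v))

/-- A minimal `(s,k)`-polar obstruction: not `(s,k)`-polar, but every proper induced
subgraph is `(s,k)`-polar. -/
def IsMinimalPolarObstruction {V : Type*} (G : SimpleGraph V) (s k : ℕ) : Prop :=
  ¬ IsSKPolar G s k ∧ ∀ S : Set V, S ≠ Set.univ → IsSKPolar (G.induce S) s k

/-- Every minimal `k`-polar obstruction has at most `k + 1` trivial connected components
(components consisting of a single vertex, i.e., isolated vertices). -/
theorem minimal_kPolar_obstruction_trivial_components_le {k : ℕ} (hk : 0 < k)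
    {V : Type*} [Fintype V] (G : SimpleGraph V)
    (hG : IsMinimalPolarObstruction G k k) :
    Nat.card {c : G.ConnectedComponent // c.supp.Subsingleton} ≤ k + 1 := by
  classical
  set I : Set V := {v | ∀ w, ¬ G.Adj v w} with hIdef
  have hinj : Nat.card {c : G.ConnectedComponent // c.supp.Subsingleton} ≤ Nat.card I := by
    refine Nat.card_le_card_of_injective
      (fun c => ⟨c.1.out, fun w hw => ?_⟩) ?_
    · have h1 : c.1.out ∈ c.1.supp := by
        simp only [SimpleGraph.ConnectedComponent.mem_supp_iff]
        exact c.1.out_eq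
      have h2 : w ∈ c.1.supp := by
        simp only [SimpleGraph.ConnectedComponent.mem_supp_iff]
        exact (SimpleGraph.ConnectedComponent.sound hw.symm.reachable).trans c.1.out_eq
      have := c.2 h2 h1
      exact G.loopless.irrefl _ (this ▸ hw)
    · intro c d h
      have h' : c.1.out = d.1.out := congrArg Subtype.val h
      have h'' := congrArg G.connectedComponentMk h'
      exact Subtype.ext ((c.1.out_eq.symm.trans h'').trans d.1.out_eq)
  refine hinj.trans ?_
  by_contra hcard
  push_neg at hcard
  -- so Nat.card I ≥ k + 2; pick v ∈ I
  have hIfin : I.Finite := Set.toFinite I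
  have hcard' : k + 2 ≤ I.ncard := by
    rw [← Nat.card_coe_set_eq]; omega
  have hne : I.Nonempty := by
    rw [← Set.ncard_pos hIfin]; omega
  obtain ⟨v, hv⟩ := hne
  set S : Set V := {v}ᶜ with hSdef
  have hSne : S ≠ Set.univ := by
    intro h
    have : v ∈ S := h ▸ Set.mem_univ v
    exact this rfl
  obtain ⟨f, hf1, hf2, hf3⟩ := hG.2 S hSne
  -- the induced adjacency is just G's adjacency
  have hadj : ∀ (x y : S), (G.induce S).Adj x y ↔ G.Adj x y := by
    intro x y; simp [SimpleGraph.comap_adj]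
  set J : Set V := I \ {v} with hJdef
  have hJcard : k + 1 ≤ J.ncard := by
    have := Set.ncard_diff_singleton_of_mem hv
    rw [hJdef]; omega
  have hmemS : ∀ x ∈ J, x ∈ S := by
    intro x hx; exact hx.2
  -- key: isolated vertices in J cannot be adjacent
  by_cases hcase : ∃ u : V, ∃ hu : u ∈ J, f ⟨u, hmemS u hu⟩ < k
  · -- extend f by placing v in the same A-class as u
    obtain ⟨u, hu, hfu⟩ := hcase
    set c := f ⟨u, hmemS u hu⟩ with hc
    have hsame : ∀ (y : V) (hy : y ≠ v), f ⟨y, hy⟩ < k → f ⟨y, hy⟩ = c := by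
      intro y hy hfy
      by_cases hyu : y = u
      · subst hyu; rfl
      · by_contra hne
        have := (hf2 ⟨u, hmemS u hu⟩ ⟨y, hy⟩
          (by simp [Subtype.ext_iff, Ne.symm hyu]) hfu hfy).mpr (fun h => hne h.symm)
        rw [hadj] at this
        exact hu.1 y this
    apply hG.1
    refine ⟨fun x => if h : x = v then c else f ⟨x, h⟩, ?_, ?_, ?_⟩
    · intro x
      by_cases h : x = v
      · simp [h]; omega
      · simpa [h] using hf1 ⟨x, h⟩
    · intro x y hxy hx hy
      by_cases h1 : x = v
      · have h2 : y ≠ v := fun h => hxy (h1.trans h.symm)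
        simp only [dif_pos h1, dif_neg h2] at hx hy ⊢
        constructor
        · intro h; exact absurd (h1 ▸ h) (hv y)
        · intro h; exact absurd (hsame y h2 hy) (Ne.symm h)
      · by_cases h2 : y = v
        · simp only [dif_neg h1, dif_pos h2] at hx hy ⊢
          constructor
          · intro h; exact absurd (h2 ▸ h.symm) (hv x)
          · intro h; exact absurd (hsame x h1 hx) h
        · simp only [dif_neg h1, dif_neg h2] at hx hy ⊢
          rw [← hadj ⟨x, h1⟩ ⟨y, h2⟩]
          exact hf2 _ _ (by simp [Subtype.ext_iff, hxy]) hx hy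
    · intro x y hxy hx hy
      by_cases h1 : x = v
      · simp only [dif_pos h1] at hx; omega
      · by_cases h2 : y = v
        · simp only [dif_pos h2] at hy; omega
        · simp only [dif_neg h1, dif_neg h2] at hx hy ⊢
          rw [← hadj ⟨x, h1⟩ ⟨y, h2⟩]
          exact hf3 _ _ (by simp [Subtype.ext_iff, hxy]) hx hy
  · -- all of J maps into [k, 2k): pigeonhole gives adjacent isolated vertices
    push_neg at hcase
    have hJfin : J.Finite := Set.toFinite J
    have hmaps : ∀ x ∈ hJfin.toFinset, (fun x => if h : x ≠ v then f ⟨x, h⟩ else 0) x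
        ∈ Finset.Ico k (2 * k) := by
      intro x hx
      rw [Set.Finite.mem_toFinset] at hx
      have hxv : x ≠ v := hx.2
      simp only [dif_pos hxv, Finset.mem_Ico]
      refine ⟨hcase x hx, ?_⟩
      have := hf1 ⟨x, hxv⟩
      omega
    have hlt : (Finset.Ico k (2 * k)).card < hJfin.toFinset.card := by
      rw [Nat.card_Ico]
      rw [Set.ncard_eq_toFinset_card J hJfin] at hJcard
      omega
    obtain ⟨x, hx, y, hy, hxy, heq⟩ :=
      Finset.exists_ne_map_eq_of_card_lt_of_maps_to hlt hmaps
    rw [Set.Finite.mem_toFinset] at hx hy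
    have hxv : x ≠ v := hx.2
    have hyv : y ≠ v := hy.2
    simp only [dif_pos hxv, dif_pos hyv] at heq
    have hadj' := (hf3 ⟨x, hxv⟩ ⟨y, hyv⟩ (by simp [Subtype.ext_iff, hxy])
      (hcase x hx) (hcase y hy)).mpr heq
    rw [hadj] at hadj'
    exact hx.1 y hadj'
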